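/- For γ̄ > 0 and ε > 0, the minimizer over ν ∈ [0,1] of δ_t(ν) = 1/(ν·γ̄ + 1) + ε/((1−ν)·γ̄ + 1) is: ν* = 0 if √ε ≥ γ̄ + 1; ν* = 1 if √ε ≤ 1/(γ̄ + 1); and ν* = (1 + (1−√ε)/γ̄)/(1+√ε) otherwise. -/

import Mathlib

theorem deltaT_minimizer (γ ε : ℝ) (hγ : 0 < γ) (hε : 0 < ε) :
    (Real.sqrt ε ≥ γ + 1 →
      IsMinOn (fun ν : ℝ => 1 / (ν * γ + 1) + ε / ((1 - ν) * γ + 1))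
        (Set.Icc (0:ℝ) 1) 0) ∧
    (Real.sqrt ε ≤ 1 / (γ + 1) →
      IsMinOn (fun ν : ℝ => 1 / (ν * γ + 1) + ε / ((1 - ν) * γ + 1))
        (Set.Icc (0:ℝ) 1) 1) ∧
    (1 / (γ + 1) < Real.sqrt ε → Real.sqrt ε < γ + 1 →
      IsMinOn (fun ν : ℝ => 1 / (ν * γ + 1) + ε / ((1 - ν) * γ + 1))
        (Set.Icc (0:ℝ) 1) ((1 + (1 - Real.sqrt ε) / γ) / (1 + Real.sqrt ε))) := by
  have hs0 : 0 < Real.sqrt ε := Real.sqrt_pos.2 hε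
  have hε' : ε = Real.sqrt ε ^ 2 := (Real.sq_sqrt hε.le).symm
  set s := Real.sqrt ε with hsdef
  refine ⟨?_, ?_, ?_⟩
  · intro h
    rw [isMinOn_iff]
    rintro ν ⟨h0, h1⟩
    have ha : 0 < ν * γ + 1 := by nlinarith
    have hb : 0 < (1 - ν) * γ + 1 := by nlinarith
    have hg1 : 0 < γ + 1 := by linarith
    show 1 / (0 * γ + 1) + ε / ((1 - 0) * γ + 1)
        ≤ 1 / (ν * γ + 1) + ε / ((1 - ν) * γ + 1)
    have hL : 1 / (0 * γ + 1) + ε / ((1 - 0) * γ + 1) = (γ + 1 + s ^ 2) / (γ + 1) := by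
      rw [hε']; field_simp; ring
    rw [hL, hε', div_add_div _ _ ha.ne' hb.ne', div_le_div_iff₀ hg1 (by positivity)]
    have hss : (γ + 1) * (γ + 1) ≤ s * s := mul_le_mul h h (by linarith) hs0.le
    have h2 : 0 ≤ s ^ 2 * (ν * γ + 1) - ((1 - ν) * γ + 1) * (γ + 1) := by
      nlinarith [mul_nonneg (mul_nonneg hs0.le hs0.le) (mul_nonneg h0 hγ.le),
        mul_nonneg (mul_nonneg h0 hγ.le) hg1.le]
    nlinarith [mul_nonneg (mul_nonneg h0 hγ.le) h2]
  · intro h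
    rw [isMinOn_iff]
    rintro ν ⟨h0, h1⟩
    have ha : 0 < ν * γ + 1 := by nlinarith
    have hb : 0 < (1 - ν) * γ + 1 := by nlinarith
    have hg1 : 0 < γ + 1 := by linarith
    show 1 / (1 * γ + 1) + ε / ((1 - 1) * γ + 1)
        ≤ 1 / (ν * γ + 1) + ε / ((1 - ν) * γ + 1)
    have hL : 1 / (1 * γ + 1) + ε / ((1 - 1) * γ + 1)
        = (1 + s ^ 2 * (γ + 1)) / (γ + 1) := by
      rw [hε']; field_simp; ring
    rw [hL, hε', div_add_div _ _ ha.ne' hb.ne', div_le_div_iff₀ hg1 (by positivity)]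
    have hsg : s * (γ + 1) ≤ 1 := by
      have := (le_div_iff₀ hg1).1 h
      linarith
    have h2 : 0 ≤ ((1 - ν) * γ + 1) - s ^ 2 * (γ + 1) * (ν * γ + 1) := by
      nlinarith [mul_le_mul hsg hsg (by positivity) zero_le_one,
        mul_nonneg (mul_nonneg (mul_nonneg hs0.le hs0.le) hg1.le)
          (mul_nonneg (by linarith : (0:ℝ) ≤ 1 - ν) hγ.le)]
    nlinarith [mul_nonneg (mul_nonneg (by linarith : (0:ℝ) ≤ 1 - ν) hγ.le) h2]
  · intro hlo hhi
    rw [isMinOn_iff]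
    rintro ν ⟨h0, h1⟩
    have ha : 0 < ν * γ + 1 := by nlinarith
    have hb : 0 < (1 - ν) * γ + 1 := by nlinarith
    have hs1 : 0 < 1 + s := by linarith
    have hg2 : 0 < γ + 2 := by linarith
    set ν₀ : ℝ := (1 + (1 - s) / γ) / (1 + s) with hν₀
    show 1 / (ν₀ * γ + 1) + ε / ((1 - ν₀) * γ + 1)
        ≤ 1 / (ν * γ + 1) + ε / ((1 - ν) * γ + 1)
    have haν : ν₀ * γ + 1 = (γ + 2) / (1 + s) := by
      rw [hν₀]; field_simp; ring
    have hbν : (1 - ν₀) * γ + 1 = (γ + 2) * s / (1 + s) := by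
      rw [hν₀]; field_simp; ring
    rw [haν, hbν]
    have heq : 1 / ((γ + 2) / (1 + s)) + ε / ((γ + 2) * s / (1 + s))
        = (1 + s) ^ 2 / (γ + 2) := by
      rw [hε']; field_simp
    rw [heq, hε', div_add_div _ _ ha.ne' hb.ne', div_le_div_iff₀ hg2 (by positivity)]
    nlinarith [sq_nonneg (((1 - ν) * γ + 1) - s * (ν * γ + 1))]
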